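/- For any m ≥ 1, any field K containing A, B, and any λ ∈ K, the polynomial Φ_m(X,λ) := (X−λ)·(Ψ′_m(X,Y))² − Ψ′_{m−1}(X,Y)·Ψ′_{m+1}(X,Y) in K[X] equals X^{m²} − λ·m²·X^{m²−1} + (lower order terms). -/

import Mathlib

open Polynomial WeierstrassCurve

namespace PhiAux

variable {R : Type*} [CommRing R]

/-- `p` agrees with `c·X^d` in degrees `≥ d - 1`. -/
def TT (c : R) (d : ℕ) (p : R[X]) : Prop :=
  ∃ r : R[X], p = C c * X ^ d + r ∧ r.degree + 2 ≤ (d : WithBot ℕ)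

lemma deg2_add {x y : R[X]} {D : WithBot ℕ} (hx : x.degree + 2 ≤ D) (hy : y.degree + 2 ≤ D) :
    (x + y).degree + 2 ≤ D := by
  refine le_trans (add_le_add_left (degree_add_le x y) 2) ?_
  rcases le_total x.degree y.degree with h | h
  · rwa [max_eq_right h]
  · rwa [max_eq_left h]

lemma deg2_of_le {p : R[X]} {k d : ℕ} (h : p.degree ≤ (k : WithBot ℕ)) (hkd : k + 2 ≤ d) :
    p.degree + 2 ≤ (d : WithBot ℕ) := by
  calc p.degree + 2 ≤ (k : WithBot ℕ) + 2 := add_le_add_left h 2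
    _ = ((k + 2 : ℕ) : WithBot ℕ) := by push_cast; rfl
    _ ≤ (d : WithBot ℕ) := by exact_mod_cast hkd

lemma TT.zero {c : R} (hc : c = 0) (d : ℕ) : TT c d 0 :=
  ⟨0, by simp [hc], by simp⟩

lemma TT.const (c : R) : TT c 0 (Polynomial.C c) := ⟨0, by simp, by simp⟩

lemma TT.one : TT (1 : R) 0 1 := by simpa using TT.const (1 : R)

lemma TT.mul {c e : R} {a b : ℕ} {p q : R[X]} (hp : TT c a p) (hq : TT e b q) :
    TT (c * e) (a + b) (p * q) := by
  obtain ⟨r, rfl, hr⟩ := hp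
  obtain ⟨s, rfl, hs⟩ := hq
  have hr' : r.degree ≤ (a : WithBot ℕ) := le_trans (le_add_of_nonneg_right (by decide)) hr
  have hs' : s.degree ≤ (b : WithBot ℕ) := le_trans (le_add_of_nonneg_right (by decide)) hs
  refine ⟨C c * X ^ a * s + r * (C e * X ^ b) + r * s, by rw [C_mul]; ring, ?_⟩
  have key : ((a : WithBot ℕ)) + b = ((a + b : ℕ) : WithBot ℕ) := by push_cast; rfl
  refine deg2_add (deg2_add ?_ ?_) ?_
  · calc (C c * X ^ a * s).degree + 2 ≤ ((C c * X ^ a).degree + s.degree) + 2 :=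
          add_le_add_left (degree_mul_le _ _) 2
      _ ≤ ((a : WithBot ℕ) + s.degree) + 2 :=
          add_le_add_left (add_le_add_left (degree_C_mul_X_pow_le a c) _) 2
      _ = (a : WithBot ℕ) + (s.degree + 2) := by rw [add_assoc]
      _ ≤ (a : WithBot ℕ) + b := add_le_add_right hs _
      _ = _ := key
  · calc (r * (C e * X ^ b)).degree + 2 ≤ (r.degree + (C e * X ^ b).degree) + 2 :=
          add_le_add_left (degree_mul_le _ _) 2
      _ ≤ (r.degree + b) + 2 :=
          add_le_add_left (add_le_add_right (degree_C_mul_X_pow_le b e) _) 2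
      _ = (r.degree + 2) + b := by rw [add_right_comm]
      _ ≤ (a : WithBot ℕ) + b := add_le_add_left hr _
      _ = _ := key
  · calc (r * s).degree + 2 ≤ (r.degree + s.degree) + 2 :=
          add_le_add_left (degree_mul_le _ _) 2
      _ = (r.degree + 2) + s.degree := by rw [add_right_comm]
      _ ≤ (a : WithBot ℕ) + s.degree := add_le_add_left hr _
      _ ≤ (a : WithBot ℕ) + b := add_le_add_right hs' _
      _ = _ := key

lemma TT.pow {c : R} {a : ℕ} {p : R[X]} (hp : TT c a p) (k : ℕ) :
    TT (c ^ k) (k * a) (p ^ k) := by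
  induction k with
  | zero => simpa using TT.one
  | succ k ih =>
    simpa [pow_succ, Nat.succ_mul] using ih.mul hp
    
lemma TT.sub {c e : R} {d : ℕ} {p q : R[X]} (hp : TT c d p) (hq : TT e d q) :
    TT (c - e) d (p - q) := by
  obtain ⟨r, rfl, hr⟩ := hp
  obtain ⟨s, rfl, hs⟩ := hq
  refine ⟨r - s, by rw [C_sub]; ring, ?_⟩
  rw [sub_eq_add_neg]
  exact deg2_add hr (by rwa [degree_neg])

lemma TT.X_mul {c : R} {d : ℕ} {p : R[X]} (hp : TT c d p) : TT c (d + 1) (X * p) := by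
  obtain ⟨r, rfl, hr⟩ := hp
  refine ⟨X * r, by ring, ?_⟩
  calc (X * r).degree + 2 ≤ (1 + r.degree) + 2 :=
        add_le_add_left (le_trans (degree_mul_le _ _) (add_le_add_left degree_X_le _)) 2
    _ = 1 + (r.degree + 2) := by rw [add_assoc]
    _ ≤ 1 + (d : WithBot ℕ) := add_le_add_right hr _
    _ = ((d + 1 : ℕ) : WithBot ℕ) := by rw [Nat.cast_add, Nat.cast_one, add_comm]

lemma TT.coeff_sub_one {c : R} {d : ℕ} {p : R[X]} (h : TT c d p) (hd : 1 ≤ d) :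
    p.coeff (d - 1) = 0 := by
  obtain ⟨r, rfl, hr⟩ := h
  rw [coeff_add, coeff_C_mul, coeff_X_pow, if_neg (by omega), mul_zero, zero_add]
  refine coeff_eq_zero_of_degree_lt ?_
  rcases eq_or_ne r 0 with rfl | hr0
  · rw [degree_zero]; exact WithBot.bot_lt_coe _
  · rw [degree_eq_natDegree hr0] at hr ⊢
    have : ((r.natDegree + 2 : ℕ) : WithBot ℕ) ≤ (d : WithBot ℕ) := by
      refine le_trans (le_of_eq ?_) hr
      push_cast; rfl
    have h2 : r.natDegree + 2 ≤ d := by exact_mod_cast this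
    exact_mod_cast Nat.cast_lt.mpr (by omega : r.natDegree < d - 1)



def eD (n : ℕ) : ℕ :=
  (n ^ 2 - if Even n then 4 else 1) / 2

lemma eD_cast {n : ℕ} (hn : n ≠ 0) :
    2 * (eD n : ℤ) = n ^ 2 - if Even n then 4 else 1 := by
  rcases n.even_or_odd' with ⟨n, rfl | rfl⟩
  · rcases n with _ | n
    · contradiction
    push_cast [eD, show (2 * (n + 1)) ^ 2 = 2 * (2 * n * (n + 2)) + 4 by ring1, even_two_mul,
      Nat.add_sub_cancel, Nat.mul_div_cancel_left _ two_pos]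
    ring1
  · push_cast [eD, show (2 * n + 1) ^ 2 = 2 * (2 * n * (n + 1)) + 1 by ring1,
      n.not_even_two_mul_add_one, Nat.add_sub_cancel, Nat.mul_div_cancel_left _ two_pos]
    ring1

lemma eD_rec (m : ℕ) :
    (eD (2 * (m + 3)) = 2 * eD (m + 2) + eD (m + 3) + eD (m + 5) ∧
    eD (2 * (m + 3)) = eD (m + 1) + eD (m + 3) + 2 * eD (m + 4)) ∧
    (eD (2 * (m + 2) + 1) =
      eD (m + 4) + 3 * eD (m + 2) + (if Even m then 2 * 3 else 0) ∧
    eD (2 * (m + 2) + 1) =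
      eD (m + 1) + 3 * eD (m + 3) + (if Even m then 0 else 2 * 3)) := by
  push_cast [← @Nat.cast_inj ℤ, ← mul_left_cancel_iff_of_pos (b := (eD _ : ℤ)) two_pos,
    mul_add, mul_left_comm (2 : ℤ)]
  repeat rw [eD_cast <| by omega]
  push_cast [Nat.even_add_one, ite_not, even_two_mul]
  constructor <;> constructor <;> split_ifs <;> ring1

def eC (n : ℕ) : ℤ :=
  if Even n then n / 2 else n

lemma eC_cast (n : ℕ) : (eC n : ℚ) = if Even n then (n / 2 : ℚ) else n := by
  rcases n.even_or_odd' with ⟨n, rfl | rfl⟩ <;> simp [eC, n.not_even_two_mul_add_one]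

lemma eC_rec (m : ℕ) :
    (eC (2 * (m + 3)) =
      eC (m + 2) ^ 2 * eC (m + 3) * eC (m + 5) -
        eC (m + 1) * eC (m + 3) * eC (m + 4) ^ 2) ∧
    (eC (2 * (m + 2) + 1) =
      eC (m + 4) * eC (m + 2) ^ 3 * (if Even m then 4 ^ 2 else 1) -
        eC (m + 1) * eC (m + 3) ^ 3 * (if Even m then 1 else 4 ^ 2)) := by
  push_cast [← @Int.cast_inj ℚ, eC_cast, even_two_mul, m.not_even_two_mul_add_one,
    Nat.even_add_one, ite_not]
  constructor <;> split_ifs <;> ring1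

variable (W : WeierstrassCurve R)

lemma tt_Ψ₂Sq (hb₂ : W.b₂ = 0) : TT (4 : R) 3 W.Ψ₂Sq := by
  refine ⟨Polynomial.C (2 * W.b₄) * X + Polynomial.C W.b₆, by rw [Ψ₂Sq, hb₂, C_0]; ring,
    deg2_of_le (k := 1) ?_ (by omega)⟩
  compute_degree <;> norm_num

lemma tt_Ψ₃ (hb₂ : W.b₂ = 0) : TT (3 : R) 4 W.Ψ₃ := by
  have h3 : (Polynomial.C (3 : R)) = 3 := map_ofNat C 3
  refine ⟨3 * Polynomial.C W.b₄ * X ^ 2 + 3 * Polynomial.C W.b₆ * X + Polynomial.C W.b₈,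
    by rw [Ψ₃, hb₂, C_0, h3]; ring, deg2_of_le (k := 2) ?_ (by omega)⟩
  compute_degree <;> norm_num

lemma tt_preΨ₄ (hb₂ : W.b₂ = 0) : TT (2 : R) 6 W.preΨ₄ := by
  have h2 : (Polynomial.C (2 : R)) = 2 := map_ofNat C 2
  refine ⟨5 * Polynomial.C W.b₄ * X ^ 4 + 10 * Polynomial.C W.b₆ * X ^ 3 +
      10 * Polynomial.C W.b₈ * X ^ 2 + Polynomial.C (W.b₂ * W.b₈ - W.b₄ * W.b₆) * X +
      Polynomial.C (W.b₄ * W.b₈ - W.b₆ ^ 2),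
    by rw [preΨ₄, hb₂, C_0, h2]; ring, deg2_of_le (k := 4) ?_ (by omega)⟩
  compute_degree <;> norm_num



lemma tt_preΨ' (hb₂ : W.b₂ = 0) (n : ℕ) :
    TT ((eC n : ℤ) : R) (eD n) (W.preΨ' n) := by
  induction n using normEDSRec with
  | zero =>
    rw [preΨ'_zero]
    exact TT.zero (by simp [eC]) _
  | one =>
    rw [preΨ'_one, show eD 1 = 0 by rfl, show ((eC 1 : ℤ) : R) = 1 by norm_num [eC]]
    exact TT.one
  | two =>
    rw [preΨ'_two, show eD 2 = 0 by rfl, show ((eC 2 : ℤ) : R) = 1 by norm_num [eC]]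
    exact TT.one
  | three =>
    rw [preΨ'_three, show eD 3 = 4 by rfl, show ((eC 3 : ℤ) : R) = 3 by norm_num [show eC 3 = 3 from by decide]]
    exact tt_Ψ₃ W hb₂
  | four =>
    rw [preΨ'_four, show eD 4 = 6 by rfl, show ((eC 4 : ℤ) : R) = 2 by norm_num [show eC 4 = 2 from by decide]]
    exact tt_preΨ₄ W hb₂
  | even m h₁ h₂ h₃ h₄ h₅ =>
    rw [preΨ'_even]
    have A := ((h₂.pow 2).mul h₃).mul h₅
    have B := (h₁.mul h₃).mul (h₄.pow 2)
    rw [show 2 * eD (m + 2) + eD (m + 3) + eD (m + 5) = eD (2 * (m + 3)) from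
      ((eD_rec m).1.1).symm] at A
    rw [show eD (m + 1) + eD (m + 3) + 2 * eD (m + 4) = eD (2 * (m + 3)) from
      ((eD_rec m).1.2).symm] at B
    have hc : ((eC (2 * (m + 3)) : ℤ) : R) =
        ((eC (m + 2) : ℤ) : R) ^ 2 * ((eC (m + 3) : ℤ) : R) * ((eC (m + 5) : ℤ) : R) -
          ((eC (m + 1) : ℤ) : R) * ((eC (m + 3) : ℤ) : R) * ((eC (m + 4) : ℤ) : R) ^ 2 := by
      rw [(eC_rec m).1]; push_cast; ring
    rw [hc]
    exact A.sub B
  | odd m h₁ h₂ h₃ h₄ =>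
    rw [preΨ'_odd]
    by_cases hm : Even m
    · rw [if_pos hm, if_pos hm, mul_one]
      have A := (h₄.mul (h₂.pow 3)).mul ((tt_Ψ₂Sq W hb₂).pow 2)
      have B := h₁.mul (h₃.pow 3)
      rw [show eD (m + 4) + 3 * eD (m + 2) + 2 * 3 = eD (2 * (m + 2) + 1) by
        have := (eD_rec m).2.1; rw [if_pos hm] at this; omega] at A
      rw [show eD (m + 1) + 3 * eD (m + 3) = eD (2 * (m + 2) + 1) by
        have := (eD_rec m).2.2; rw [if_pos hm] at this; omega] at B
      have hc : ((eC (2 * (m + 2) + 1) : ℤ) : R) =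
          ((eC (m + 4) : ℤ) : R) * ((eC (m + 2) : ℤ) : R) ^ 3 * (4 : R) ^ 2 -
            ((eC (m + 1) : ℤ) : R) * ((eC (m + 3) : ℤ) : R) ^ 3 := by
        rw [(eC_rec m).2, if_pos hm, if_pos hm]; push_cast; ring
      rw [hc]
      exact A.sub B
    · rw [if_neg hm, if_neg hm, mul_one]
      have A := h₄.mul (h₂.pow 3)
      have B := (h₁.mul (h₃.pow 3)).mul ((tt_Ψ₂Sq W hb₂).pow 2)
      rw [show eD (m + 4) + 3 * eD (m + 2) = eD (2 * (m + 2) + 1) by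
        have := (eD_rec m).2.1; rw [if_neg hm] at this; omega] at A
      rw [show eD (m + 1) + 3 * eD (m + 3) + 2 * 3 = eD (2 * (m + 2) + 1) by
        have := (eD_rec m).2.2; rw [if_neg hm] at this; omega] at B
      have hc : ((eC (2 * (m + 2) + 1) : ℤ) : R) =
          ((eC (m + 4) : ℤ) : R) * ((eC (m + 2) : ℤ) : R) ^ 3 -
            ((eC (m + 1) : ℤ) : R) * ((eC (m + 3) : ℤ) : R) ^ 3 * (4 : R) ^ 2 := by
        rw [(eC_rec m).2, if_neg hm, if_neg hm]; push_cast; ring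
      rw [hc]
      exact A.sub B



lemma tt_Φ (hb₂ : W.b₂ = 0) (n : ℕ) :
    TT (1 : R) ((n + 1) ^ 2) (W.Φ ((n + 1 : ℕ) : ℤ)) := by
  rcases n with _ | _ | n
  · rw [Nat.cast_one, Φ_one]
    exact ⟨0, by simp, by simp⟩
  · rw [show ((2 : ℕ) : ℤ) = 2 by norm_num, Φ_two]
    refine ⟨-(Polynomial.C W.b₄ * X ^ 2) - Polynomial.C (2 * W.b₆) * X - Polynomial.C W.b₈,
      by rw [C_1]; ring, deg2_of_le (k := 2) ?_ (by omega)⟩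
    compute_degree <;> norm_num
  · have hd : (n + 2 + 1) ^ 2 = 1 + 2 * eD (n + 3) + if Even (n + 2) then 0 else 3 := by
      push_cast [← @Nat.cast_inj ℤ, eD_cast (by omega : n + 3 ≠ 0), Nat.even_add_one, ite_not]
      split_ifs <;> ring1
    have hd' : (n + 2 + 1) ^ 2 =
        eD (n + 4) + eD (n + 2) + if Even (n + 2) then 3 else 0 := by
      push_cast [← @Nat.cast_inj ℤ, ← mul_left_cancel_iff_of_pos (b := (_ ^ 2 : ℤ)) two_pos,
        mul_add, eD_cast (by omega : n + 4 ≠ 0), eD_cast (by omega : n + 2 ≠ 0),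
        Nat.even_add_one, ite_not]
      split_ifs <;> ring1
    have hc : (1 : ℤ) = eC (n + 3) ^ 2 * (if Even (n + 2) then 1 else 4) -
        eC (n + 4) * eC (n + 2) * (if Even (n + 2) then 4 else 1) := by
      push_cast [← @Int.cast_inj ℚ, eC_cast, Nat.even_add_one, ite_not]
      split_ifs <;> ring1
    rw [show ((n + 2 + 1 : ℕ) : ℤ) = ((n + 2 : ℕ) : ℤ) + 1 by push_cast; ring, Φ_ofNat]
    by_cases h : Even (n + 2)
    · rw [if_pos h, if_pos h, mul_one]
      have A := ((tt_preΨ' W hb₂ (n + 3)).pow 2).X_mul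
      have B := ((tt_preΨ' W hb₂ (n + 4)).mul (tt_preΨ' W hb₂ (n + 2))).mul (tt_Ψ₂Sq W hb₂)
      rw [show 2 * eD (n + 3) + 1 = (n + 2 + 1) ^ 2 by
        rw [if_pos h] at hd; omega] at A
      rw [show eD (n + 4) + eD (n + 2) + 3 = (n + 2 + 1) ^ 2 by
        rw [if_pos h] at hd'; omega] at B
      have hcc : (1 : R) = ((eC (n + 3) : ℤ) : R) ^ 2 -
          ((eC (n + 4) : ℤ) : R) * ((eC (n + 2) : ℤ) : R) * (4 : R) := by
        rw [if_pos h, if_pos h, mul_one] at hc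
        exact_mod_cast congrArg (fun z : ℤ => ((z : ℤ) : R)) hc
      rw [hcc]
      exact A.sub B
    · rw [if_neg h, if_neg h, mul_one]
      have A := (((tt_preΨ' W hb₂ (n + 3)).pow 2).X_mul).mul (tt_Ψ₂Sq W hb₂)
      have B := (tt_preΨ' W hb₂ (n + 4)).mul (tt_preΨ' W hb₂ (n + 2))
      rw [show 2 * eD (n + 3) + 1 + 3 = (n + 2 + 1) ^ 2 by
        rw [if_neg h] at hd; omega] at A
      rw [show eD (n + 4) + eD (n + 2) = (n + 2 + 1) ^ 2 by
        rw [if_neg h] at hd'; omega] at B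
      have hcc : (1 : R) = ((eC (n + 3) : ℤ) : R) ^ 2 * (4 : R) -
          ((eC (n + 4) : ℤ) : R) * ((eC (n + 2) : ℤ) : R) := by
        rw [if_neg h, if_neg h, mul_one] at hc
        exact_mod_cast congrArg (fun z : ℤ => ((z : ℤ) : R)) hc
      rw [hcc]
      exact A.sub B

lemma coeff_Φ_sub_one (hb₂ : W.b₂ = 0) {m : ℕ} (hm : 1 ≤ m) :
    (W.Φ ((m : ℕ) : ℤ)).coeff (m ^ 2 - 1) = 0 := by
  obtain ⟨n, rfl⟩ : ∃ n, m = n + 1 := ⟨m - 1, by omega⟩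
  exact (tt_Φ W hb₂ n).coeff_sub_one (Nat.one_le_pow 2 (n + 1) (by omega))

end PhiAux


/-- For any `m ≥ 1`, any field `K` containing `A`, `B` (that is, any short
Weierstrass curve `y² = x³ + Ax + B` over `K`, i.e. with `a₁ = a₂ = a₃ = 0`), and any `λ ∈ K`,
the polynomial `Φ_m(X,λ) := (X−λ)·(Ψ′_m(X,Y))² − Ψ′_{m−1}(X,Y)·Ψ′_{m+1}(X,Y)` in `K[X]`
(which equals `W.Φ m − C λ · W.ΨSq m` in Mathlib's notation) equals
`X^{m²} − λ·m²·X^{m²−1} + (lower order terms)`: it is monic of degree `m²` and its coefficient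
in degree `m² − 1` is `−λ·m²`. -/
theorem Phi_lambda_monic_subleading
    {K : Type*} [Field K] (W : WeierstrassCurve K)
    (ha₁ : W.a₁ = 0) (ha₂ : W.a₂ = 0) (ha₃ : W.a₃ = 0)
    (lam : K) (m : ℕ) (hm : 1 ≤ m) :
    (WeierstrassCurve.Φ W (m : ℤ) - C lam * W.ΨSq (m : ℤ)).natDegree = m ^ 2 ∧
    (WeierstrassCurve.Φ W (m : ℤ) - C lam * W.ΨSq (m : ℤ)).coeff (m ^ 2) = 1 ∧
    (WeierstrassCurve.Φ W (m : ℤ) - C lam * W.ΨSq (m : ℤ)).coeff (m ^ 2 - 1) =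
      -(lam * (m : K) ^ 2) := by
  have hb₂ : W.b₂ = 0 := by simp [WeierstrassCurve.b₂, ha₁, ha₂]
  have hmabs : ((m : ℤ)).natAbs = m := Int.natAbs_natCast m
  have hΨdeg : (W.ΨSq (m : ℤ)).natDegree ≤ m ^ 2 - 1 := by
    simpa [hmabs] using W.natDegree_ΨSq_le (m : ℤ)
  have hΨlt : (W.ΨSq (m : ℤ)).natDegree < m ^ 2 :=
    lt_of_le_of_lt hΨdeg (by have := Nat.one_le_pow 2 m (by omega); omega)
  have hcoeffTop : (WeierstrassCurve.Φ W (m : ℤ) - C lam * W.ΨSq (m : ℤ)).coeff (m ^ 2) = 1 := by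
    rw [coeff_sub, coeff_C_mul, coeff_eq_zero_of_natDegree_lt hΨlt, mul_zero, sub_zero]
    simpa [hmabs] using W.coeff_Φ (m : ℤ)
  refine ⟨?_, hcoeffTop, ?_⟩
  · refine natDegree_eq_of_le_of_coeff_ne_zero ?_ (hcoeffTop ▸ one_ne_zero)
    refine le_trans (natDegree_sub_le _ _) (max_le ?_ ?_)
    · simpa [hmabs] using W.natDegree_Φ_le (m : ℤ)
    · exact le_trans (natDegree_C_mul_le lam _) (le_trans hΨdeg (by omega))
  · have hΦ : (WeierstrassCurve.Φ W (m : ℤ)).coeff (m ^ 2 - 1) = 0 :=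
      PhiAux.coeff_Φ_sub_one W hb₂ hm
    have hΨ : (W.ΨSq (m : ℤ)).coeff (m ^ 2 - 1) = ((m : ℤ) : K) ^ 2 := by
      have := W.coeff_ΨSq (m : ℤ)
      rw [hmabs] at this
      exact_mod_cast this
    rw [coeff_sub, coeff_C_mul, hΦ, hΨ, zero_sub]
    push_cast
    ring
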